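/- (Distance of optimizer to ground truth under perturbation) Let Q ∈ St(d,K), let g(X) = Σ_{k=1}^K a_k x_kᵀ (Q Θ² Qᵀ) x_k and h(X) = Σ_{k=1}^K x_kᵀ Δ_k x_k for symmetric matrices Δ_k, and let f = g + h. Suppose g satisfies global quadratic growth: g(Q) − g(X) ≥ η̄ d_F(X,Q)² for all X ∈ St(d,K) with η̄ > 0. If X̂ ∈ St(d,K) is a global maximizer of f over St(d,K), then d_F(X̂,Q) ≤ (2√K / η̄) · max_{k∈[K]} ‖Δ_k‖. -/

import Mathlib

open Matrix

/-- Frobenius norm of a real matrix. -/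
noncomputable def frobNorm {m n : ℕ} (A : Matrix (Fin m) (Fin n) ℝ) : ℝ :=
  Real.sqrt (∑ i, ∑ j, (A i j) ^ 2)

/-- Operator (spectral) norm of a real matrix. -/
noncomputable def opNorm {m n : ℕ} (A : Matrix (Fin m) (Fin n) ℝ) : ℝ :=
  ‖LinearMap.toContinuousLinearMap (Matrix.toEuclideanLin A)‖

/-- `d_F(X,Q)`: minimum of `‖X − Q diag(q)‖_F` over sign vectors
`q ∈ {−1,1}^K`. -/
noncomputable def dF {d K : ℕ} (X Q : Matrix (Fin d) (Fin K) ℝ) : ℝ :=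
  Finset.univ.inf' (Finset.univ_nonempty (α := Fin K → ℤˣ))
    fun q => frobNorm (X - Q * Matrix.diagonal fun k => ((q k : ℤ) : ℝ))

/-- Euclidean norm of a real vector, as the norm in `EuclideanSpace`. -/
noncomputable def en {d : ℕ} (x : Fin d → ℝ) : ℝ :=
  ‖(WithLp.equiv 2 (Fin d → ℝ)).symm x‖

lemma en_eq {d : ℕ} (x : Fin d → ℝ) : en x = Real.sqrt (∑ i, x i ^ 2) := by
  rw [en, EuclideanSpace.norm_eq]
  simp [Real.norm_eq_abs, sq_abs]

lemma en_nonneg {d : ℕ} (x : Fin d → ℝ) : 0 ≤ en x := norm_nonneg _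

lemma en_add_le {d : ℕ} (x y : Fin d → ℝ) : en (x + y) ≤ en x + en y := by
  simpa [en] using norm_add_le ((WithLp.equiv 2 (Fin d → ℝ)).symm x)
    ((WithLp.equiv 2 (Fin d → ℝ)).symm y)

lemma dot_mulVec_le {d : ℕ} (A : Matrix (Fin d) (Fin d) ℝ) (x y : Fin d → ℝ) :
    x ⬝ᵥ A *ᵥ y ≤ opNorm A * en x * en y := by
  set x' := (WithLp.equiv 2 (Fin d → ℝ)).symm x with hx'
  set y' := (WithLp.equiv 2 (Fin d → ℝ)).symm y with hy'
  set T := LinearMap.toContinuousLinearMap (Matrix.toEuclideanLin A) with hT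
  have h1 : x ⬝ᵥ A *ᵥ y = inner (𝕜 := ℝ) x' (T y') := by
    have : T y' = Matrix.toEuclideanLin A y' := rfl
    rw [this, hy', WithLp.equiv_symm_apply, Matrix.toEuclideanLin_toLp, PiLp.inner_apply]
    simp only [hx', WithLp.equiv_symm_apply, PiLp.toLp_apply, RCLike.inner_apply, conj_trivial]
    rw [Matrix.toLin'_apply]
    simp [dotProduct, mul_comm]
  have h2 : inner (𝕜 := ℝ) x' (T y') ≤ ‖x'‖ * ‖T y'‖ := real_inner_le_norm _ _
  have h3 : ‖T y'‖ ≤ ‖T‖ * ‖y'‖ := T.le_opNorm y'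
  have h4 : x ⬝ᵥ A *ᵥ y ≤ ‖x'‖ * (‖T‖ * ‖y'‖) := by
    rw [h1]
    exact le_trans h2 (mul_le_mul_of_nonneg_left h3 (norm_nonneg _))
  calc x ⬝ᵥ A *ᵥ y ≤ ‖x'‖ * (‖T‖ * ‖y'‖) := h4
    _ = opNorm A * en x * en y := by rw [opNorm, en, en, ← hx', ← hy', ← hT]; ring

lemma dot_symm_comm {d : ℕ} (A : Matrix (Fin d) (Fin d) ℝ) (hA : Aᵀ = A)
    (u v : Fin d → ℝ) : u ⬝ᵥ A *ᵥ v = v ⬝ᵥ A *ᵥ u := by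
  rw [Matrix.dotProduct_mulVec, ← Matrix.mulVec_transpose, hA, dotProduct_comm]

/-- Distance of a global maximizer of the perturbed problem `f = g + h` to the
ground truth `Q`, assuming global quadratic growth of the population part
`g`. -/
theorem optimizer_distance_to_ground_truth {d K : ℕ} (hK : 0 < K)
    (Q : Matrix (Fin d) (Fin K) ℝ) (hQ : Qᵀ * Q = 1)
    (lam a : Fin K → ℝ)
    (Δ : Fin K → Matrix (Fin d) (Fin d) ℝ) (hΔ : ∀ k, (Δ k)ᵀ = Δ k)
    (g h f : Matrix (Fin d) (Fin K) ℝ → ℝ)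
    (hg : ∀ X, g X = ∑ k, a k *
      ((fun i => X i k) ⬝ᵥ (Q * Matrix.diagonal lam * Qᵀ) *ᵥ fun i => X i k))
    (hh : ∀ X, h X = ∑ k, (fun i => X i k) ⬝ᵥ (Δ k) *ᵥ fun i => X i k)
    (hf : ∀ X, f X = g X + h X)
    (ηbar : ℝ) (hηbar : 0 < ηbar)
    (hQG : ∀ X : Matrix (Fin d) (Fin K) ℝ, Xᵀ * X = 1 →
      g Q - g X ≥ ηbar * dF X Q ^ 2)
    (Xhat : Matrix (Fin d) (Fin K) ℝ) (hXhat : Xhatᵀ * Xhat = 1)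
    (hopt : ∀ X : Matrix (Fin d) (Fin K) ℝ, Xᵀ * X = 1 → f X ≤ f Xhat) :
    dF Xhat Q ≤ (2 * Real.sqrt K / ηbar) *
      Finset.univ.sup' ⟨⟨0, hK⟩, Finset.mem_univ _⟩ fun k => opNorm (Δ k) := by
  classical
  set M := Finset.univ.sup' ⟨⟨0, hK⟩, Finset.mem_univ _⟩ (fun k => opNorm (Δ k)) with hM
  have hMk : ∀ k, opNorm (Δ k) ≤ M := fun k => by
    rw [hM]; exact Finset.le_sup' (fun k => opNorm (Δ k)) (Finset.mem_univ k)
  have hM0 : 0 ≤ M := le_trans (norm_nonneg _) (hMk ⟨0, hK⟩)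
  obtain ⟨q, -, hq⟩ := Finset.exists_mem_eq_inf' (Finset.univ_nonempty (α := Fin K → ℤˣ))
    (fun q => frobNorm (Xhat - Q * Matrix.diagonal fun k => ((q k : ℤ) : ℝ)))
  set s : Fin K → ℝ := fun k => ((q k : ℤ) : ℝ) with hs
  have hs1 : ∀ k, s k * s k = 1 := by
    intro k
    rcases Int.units_eq_one_or (q k) with h | h <;> simp [hs, h]
  set Y := Q * Matrix.diagonal s with hY
  have hD : dF Xhat Q = frobNorm (Xhat - Y) := by rw [dF]; exact hq
  set D := dF Xhat Q with hDdef
  have hD0 : 0 ≤ D := by rw [hD, frobNorm]; positivity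
  have hYapp : ∀ i k, Y i k = Q i k * s k := fun i k => Matrix.mul_diagonal ..
  -- unit columns
  have hcolX : ∀ k, ∑ i, Xhat i k ^ 2 = 1 := by
    intro k
    have h1 := congrFun (congrFun hXhat k) k
    simpa [Matrix.mul_apply, Matrix.one_apply, pow_two] using h1
  have hcolQ : ∀ k, ∑ i, Q i k ^ 2 = 1 := by
    intro k
    have h1 := congrFun (congrFun hQ k) k
    simpa [Matrix.mul_apply, Matrix.one_apply, pow_two] using h1
  have hcolY : ∀ k, ∑ i, Y i k ^ 2 = 1 := by
    intro k
    have h1 : ∀ i, Y i k ^ 2 = Q i k ^ 2 * (s k * s k) := by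
      intro i; rw [hYapp]; ring
    rw [Finset.sum_congr rfl (fun i _ => h1 i), ← Finset.sum_mul, hs1, mul_one, hcolQ]
  -- column norms of the difference
  set c : Fin K → ℝ := fun k => en (fun i => Xhat i k - Y i k) with hc
  have hc0 : ∀ k, 0 ≤ c k := fun k => en_nonneg _
  have hck : ∀ k, c k ^ 2 = ∑ i, (Xhat i k - Y i k) ^ 2 := by
    intro k
    rw [show c k = Real.sqrt (∑ i, (Xhat i k - Y i k) ^ 2) from en_eq _,
      Real.sq_sqrt (by positivity)]
  have hD2 : D ^ 2 = ∑ k, c k ^ 2 := by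
    rw [hD, frobNorm, Real.sq_sqrt (by positivity), Finset.sum_comm]
    refine Finset.sum_congr rfl fun k _ => ?_
    rw [hck k]
    exact Finset.sum_congr rfl fun i _ => by rw [Matrix.sub_apply]
  -- h is invariant under the sign flips
  have hhQY : h Y = h Q := by
    rw [hh, hh]
    refine Finset.sum_congr rfl fun k _ => ?_
    have hyk : (fun i => Y i k) = s k • (fun i => Q i k) := by
      funext i; simp [hYapp i k, mul_comm]
    rw [hyk, smul_dotProduct, Matrix.mulVec_smul, dotProduct_smul,
      smul_eq_mul, smul_eq_mul, ← mul_assoc, hs1 k, one_mul]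
  -- per-column key bound
  have hkey : ∀ k, (fun i => Xhat i k) ⬝ᵥ Δ k *ᵥ (fun i => Xhat i k)
      - (fun i => Y i k) ⬝ᵥ Δ k *ᵥ (fun i => Y i k) ≤ 2 * M * c k := by
    intro k
    have hiden : (fun i => Xhat i k) ⬝ᵥ Δ k *ᵥ (fun i => Xhat i k)
        - (fun i => Y i k) ⬝ᵥ Δ k *ᵥ (fun i => Y i k)
        = ((fun i => Xhat i k) - fun i => Y i k) ⬝ᵥ Δ k *ᵥ
          ((fun i => Xhat i k) + fun i => Y i k) := by
      rw [sub_dotProduct, Matrix.mulVec_add, dotProduct_add,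
        dotProduct_add,
        dot_symm_comm (Δ k) (hΔ k) (fun i => Xhat i k) (fun i => Y i k)]
      ring
    rw [hiden]
    have hb := dot_mulVec_le (Δ k) ((fun i => Xhat i k) - fun i => Y i k)
      ((fun i => Xhat i k) + fun i => Y i k)
    have he1 : en ((fun i => Xhat i k) - fun i => Y i k) = c k := rfl
    have he2 : en ((fun i => Xhat i k) + fun i => Y i k) ≤ 2 := by
      have h1 := en_add_le (fun i => Xhat i k) (fun i => Y i k)
      have e1 : en (fun i => Xhat i k) = 1 := by rw [en_eq, hcolX k, Real.sqrt_one]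
      have e2 : en (fun i => Y i k) = 1 := by rw [en_eq, hcolY k, Real.sqrt_one]
      linarith
    rw [he1] at hb
    have hop : 0 ≤ opNorm (Δ k) := norm_nonneg _
    nlinarith [hb, he2, hMk k, hc0 k, hM0, hop,
      en_nonneg ((fun i => Xhat i k) + fun i => Y i k),
      mul_nonneg hop (hc0 k), mul_nonneg hM0 (hc0 k)]
  -- combine
  have hgrow : ηbar * D ^ 2 ≤ g Q - g Xhat := hQG Xhat hXhat
  have hgle : g Q - g Xhat ≤ h Xhat - h Q := by
    have h1 := hf Q
    have h2 := hf Xhat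
    have h3 := hopt Q hQ
    linarith
  have hsum : h Xhat - h Q ≤ 2 * M * ∑ k, c k := by
    rw [← hhQY, hh, hh, ← Finset.sum_sub_distrib]
    calc (∑ k, ((fun i => Xhat i k) ⬝ᵥ Δ k *ᵥ (fun i => Xhat i k)
            - (fun i => Y i k) ⬝ᵥ Δ k *ᵥ (fun i => Y i k)))
        ≤ ∑ k, 2 * M * c k := Finset.sum_le_sum fun k _ => hkey k
      _ = 2 * M * ∑ k, c k := by rw [Finset.mul_sum]
  have hcsum0 : 0 ≤ ∑ k, c k := Finset.sum_nonneg fun k _ => hc0 k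
  have hcs : ∑ k, c k ≤ Real.sqrt K * D := by
    have h1 := sq_sum_le_card_mul_sum_sq (s := (Finset.univ : Finset (Fin K))) (f := c)
    calc ∑ k, c k = Real.sqrt ((∑ k, c k) ^ 2) := (Real.sqrt_sq hcsum0).symm
      _ ≤ Real.sqrt ((K : ℝ) * D ^ 2) := by
          apply Real.sqrt_le_sqrt
          rw [hD2]
          simpa using h1
      _ = Real.sqrt K * D := by
          rw [Real.sqrt_mul (Nat.cast_nonneg K), Real.sqrt_sq hD0]
  have hfinal : ηbar * D ^ 2 ≤ 2 * Real.sqrt K * M * D := by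
    calc ηbar * D ^ 2 ≤ h Xhat - h Q := le_trans hgrow hgle
      _ ≤ 2 * M * ∑ k, c k := hsum
      _ ≤ 2 * M * (Real.sqrt K * D) := mul_le_mul_of_nonneg_left hcs (by positivity)
      _ = 2 * Real.sqrt K * M * D := by ring
  rcases eq_or_lt_of_le hD0 with h0 | h0
  · rw [← h0]
    have : 0 ≤ 2 * Real.sqrt K / ηbar := by positivity
    exact mul_nonneg this hM0
  · rw [div_mul_eq_mul_div, le_div_iff₀ hηbar]
    have h5 : ηbar * D * D ≤ 2 * Real.sqrt K * M * D := by nlinarith [hfinal]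
    have h6 : ηbar * D ≤ 2 * Real.sqrt K * M := le_of_mul_le_mul_right h5 h0
    nlinarith [h6]
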